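/- Let τ > 2, s > 0, let n be a nonnegative integer, and let ξ_1, …, ξ_n be any points in [0,1]. Then there exist two functions f₊, f₋ : [0,1] → ℝ, each of the form f_±(x) = ∫₀ˣ g_±(t) dt for some g_± : [0,1] → ℝ of bounded variation, such that: (i) Var(g_±) ≤ s; (ii) both f₊ and f₋ lie in the cone C_τ, i.e., Var(g_±) ≤ τ·∫₀¹ |g_±(t) − (f_±(1) − f_±(0))| dt; (iii) f₊(ξ_i) = f₋(ξ_i) for all i = 1,…,n; and (iv) ∫₀¹ f₊(x) dx − ∫₀¹ f₋(x) dx ≥ s(τ−2)/(16τ(n+1)²). Consequently, any deterministic algorithm for univariate integration that uses only the n function values f(ξ_1),…,f(ξ_n) must make an error of at least s(τ−2)/(32τ(n+1)²) on at least one function in C_τ with Var(f′) ≤ s. -/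

import Mathlib

open MeasureTheory Set

lemma evar_neg (f : ℝ → ℝ) (s : Set ℝ) :
    eVariationOn (fun x => - f x) s = eVariationOn f s := by
  simp only [eVariationOn, edist_neg_neg]

lemma evar_add_le (f g h : ℝ → ℝ) (hfg : ∀ x, h x = f x + g x) (s : Set ℝ) :
    eVariationOn h s ≤ eVariationOn f s + eVariationOn g s := by
  apply iSup_le
  rintro ⟨n, ⟨u, hu, us⟩⟩
  calc ∑ i ∈ Finset.range n, edist (h (u (i+1))) (h (u i))
      ≤ ∑ i ∈ Finset.range n, (edist (f (u (i+1))) (f (u i)) + edist (g (u (i+1))) (g (u i))) := by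
        refine Finset.sum_le_sum fun i _ => ?_
        rw [hfg, hfg]
        exact edist_add_add_le _ _ _ _
    _ = (∑ i ∈ Finset.range n, edist (f (u (i+1))) (f (u i)))
        + ∑ i ∈ Finset.range n, edist (g (u (i+1))) (g (u i)) := Finset.sum_add_distrib
    _ ≤ _ := add_le_add (eVariationOn.sum_le (f := f) (n := n) hu us) (eVariationOn.sum_le (f := g) (n := n) hu us)

lemma evar_mono_le {f : ℝ → ℝ} (hf : MonotoneOn f (Icc 0 1)) :
    eVariationOn f (Icc (0:ℝ) 1) ≤ ENNReal.ofReal (f 1 - f 0) := by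
  have := hf.eVariationOn_le (left_mem_Icc.mpr zero_le_one) (right_mem_Icc.mpr zero_le_one)
  rwa [inter_self] at this

lemma evar_anti_le {f : ℝ → ℝ} (hf : AntitoneOn f (Icc 0 1)) :
    eVariationOn f (Icc (0:ℝ) 1) ≤ ENNReal.ofReal (f 0 - f 1) := by
  have hneg : MonotoneOn (fun x => - f x) (Icc (0:ℝ) 1) := hf.neg
  have h2 := evar_mono_le hneg
  rw [evar_neg] at h2
  simpa [neg_add_eq_sub] using h2

lemma integral_const_on_Ioo {f : ℝ → ℝ} {c p q : ℝ} (hpq : p ≤ q)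
    (h : ∀ x ∈ Ioo p q, f x = c) : ∫ x in p..q, f x = c * (q - p) := by
  rw [intervalIntegral.integral_of_le hpq, MeasureTheory.integral_Ioc_eq_integral_Ioo,
    MeasureTheory.setIntegral_congr_fun measurableSet_Ioo h]
  simp [Real.volume_Ioo, ENNReal.toReal_ofReal (sub_nonneg.2 hpq), mul_comm, hpq]

lemma II_of_bounded {f : ℝ → ℝ} (hm : Measurable f) {C : ℝ} (h : ∀ x, |f x| ≤ C)
    (p q : ℝ) : IntervalIntegrable f volume p q := by
  rw [intervalIntegrable_iff]
  have hC : IntegrableOn (fun _ : ℝ => C) (Set.uIoc p q) volume :=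
    integrableOn_const measure_Ioc_lt_top.ne
  refine hC.mono' hm.aestronglyMeasurable.restrict (ae_of_all _ fun x => ?_)
  simpa [Real.norm_eq_abs] using h x

set_option maxHeartbeats 2000000 in
lemma key (τ s a b : ℝ) (hτ : 2 < τ) (hs : 0 < s) (ha : 0 ≤ a) (hab : a < b) (hb : b ≤ 1) :
    ∃ gp gm : ℝ → ℝ,
      eVariationOn gp (Icc 0 1) ≤ ENNReal.ofReal s ∧
      eVariationOn gm (Icc 0 1) ≤ ENNReal.ofReal s ∧
      (eVariationOn gp (Icc 0 1)).toReal
        ≤ τ * ∫ t in (0:ℝ)..1, |gp t - ∫ u in (0:ℝ)..1, gp u| ∧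
      (eVariationOn gm (Icc 0 1)).toReal
        ≤ τ * ∫ t in (0:ℝ)..1, |gm t - ∫ u in (0:ℝ)..1, gm u| ∧
      (∀ w, 0 ≤ w → (w ≤ a ∨ b ≤ w) →
        (∫ t in (0:ℝ)..w, gp t) = ∫ t in (0:ℝ)..w, gm t) ∧
      (∫ x in (0:ℝ)..1, ∫ t in (0:ℝ)..x, gp t) - (∫ x in (0:ℝ)..1, ∫ t in (0:ℝ)..x, gm t)
        = s * (τ - 2) / (16 * τ) * (b - a)^2 := by
  have hτ0 : (0:ℝ) < τ := by linarith
  set c₀ : ℝ := s * (τ + 4) / (8 * τ) with hc₀def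
  set c₁ : ℝ := s * (τ - 2) / (8 * τ) with hc₁def
  have hc₁ : 0 < c₁ := div_pos (mul_pos hs (by linarith)) (by linarith)
  have hc₀ : 0 < c₀ := by rw [hc₀def]; positivity
  have hc01 : c₁ ≤ c₀ := by
    rw [hc₁def, hc₀def, div_le_div_iff₀ (by linarith) (by linarith)]
    nlinarith
  set m : ℝ := (a + b) / 2 with hmdef
  have ham : a < m := by rw [hmdef]; linarith
  have hmb : m < b := by rw [hmdef]; linarith
  have hm0 : 0 < m := lt_of_le_of_lt ha ham
  have hm1 : m ≤ 1 := le_of_lt (lt_of_lt_of_le hmb hb)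
  set g0 : ℝ → ℝ := fun t => 1 - 2 * (if 1/2 ≤ t then (1:ℝ) else 0) with hg0def
  set g1 : ℝ → ℝ := fun t => (if a ≤ t then (1:ℝ) else 0)
      - 2 * (if m ≤ t then (1:ℝ) else 0) + (if b ≤ t then (1:ℝ) else 0) with hg1def
  set gp : ℝ → ℝ := fun t => c₀ * g0 t + c₁ * g1 t with hgpdef
  set gm : ℝ → ℝ := fun t => c₀ * g0 t - c₁ * g1 t with hgmdef
  -- pointwise values
  have hg0val : ∀ t, g0 t = 1 ∨ g0 t = -1 := by
    intro t; rw [hg0def]; dsimp only; split_ifs <;> norm_num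
  have hg1zero_lo : ∀ x, x < a → g1 x = 0 := by
    intro x hx
    rw [hg1def]; dsimp only
    rw [if_neg (by linarith), if_neg (by linarith), if_neg (by linarith)]
    ring
  have hg1one : ∀ x, a ≤ x → x < m → g1 x = 1 := by
    intro x hx hx2
    rw [hg1def]; dsimp only
    rw [if_pos hx, if_neg (by linarith), if_neg (by linarith)]
    ring
  have hg1negone : ∀ x, m ≤ x → x < b → g1 x = -1 := by
    intro x hx hx2
    rw [hg1def]; dsimp only
    rw [if_pos (by linarith), if_pos hx, if_neg (by linarith)]
    ring
  have hg1zero_hi : ∀ x, b ≤ x → g1 x = 0 := by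
    intro x hx
    rw [hg1def]; dsimp only
    rw [if_pos (by linarith), if_pos (by linarith), if_pos hx]
    ring
  have hg1val : ∀ t, g1 t = 0 ∨ g1 t = 1 ∨ g1 t = -1 := by
    intro t
    rcases lt_or_ge t a with h | h
    · exact Or.inl (hg1zero_lo t h)
    rcases lt_or_ge t m with h2 | h2
    · exact Or.inr (Or.inl (hg1one t h h2))
    rcases lt_or_ge t b with h3 | h3
    · exact Or.inr (Or.inr (hg1negone t h2 h3))
    · exact Or.inl (hg1zero_hi t h3)
  -- measurability and integrability
  have hmeas0 : Measurable g0 := by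
    rw [hg0def]
    exact (measurable_const.sub ((measurable_const.ite
      (measurableSet_le measurable_const measurable_id) measurable_const).const_mul 2))
  have hmeas1 : Measurable g1 := by
    rw [hg1def]
    apply Measurable.add
    apply Measurable.sub
    · exact measurable_const.ite (measurableSet_le measurable_const measurable_id) measurable_const
    · exact (measurable_const.ite (measurableSet_le measurable_const measurable_id)
        measurable_const).const_mul 2
    · exact measurable_const.ite (measurableSet_le measurable_const measurable_id) measurable_const
  have hbd0 : ∀ t, |g0 t| ≤ 1 := by
    intro t; rcases hg0val t with h | h <;> rw [h] <;> norm_num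
  have hbd1 : ∀ t, |g1 t| ≤ 1 := by
    intro t; rcases hg1val t with h | h | h <;> rw [h] <;> norm_num
  have hIg0 : ∀ p q : ℝ, IntervalIntegrable g0 volume p q := II_of_bounded hmeas0 hbd0
  have hIg1 : ∀ p q : ℝ, IntervalIntegrable g1 volume p q := II_of_bounded hmeas1 hbd1
  have hIgp : ∀ p q : ℝ, IntervalIntegrable gp volume p q := fun p q =>
    ((hIg0 p q).const_mul c₀).add ((hIg1 p q).const_mul c₁)
  have hIgm : ∀ p q : ℝ, IntervalIntegrable gm volume p q := fun p q =>
    ((hIg0 p q).const_mul c₀).sub ((hIg1 p q).const_mul c₁)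
  -- splitting of integrals
  have hsplitp : ∀ w : ℝ, (∫ t in (0:ℝ)..w, gp t)
      = c₀ * (∫ t in (0:ℝ)..w, g0 t) + c₁ * ∫ t in (0:ℝ)..w, g1 t := by
    intro w
    rw [hgpdef]
    rw [intervalIntegral.integral_add ((hIg0 0 w).const_mul c₀) ((hIg1 0 w).const_mul c₁),
      intervalIntegral.integral_const_mul, intervalIntegral.integral_const_mul]
  have hsplitm : ∀ w : ℝ, (∫ t in (0:ℝ)..w, gm t)
      = c₀ * (∫ t in (0:ℝ)..w, g0 t) - c₁ * ∫ t in (0:ℝ)..w, g1 t := by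
    intro w
    rw [hgmdef]
    rw [intervalIntegral.integral_sub ((hIg0 0 w).const_mul c₀) ((hIg1 0 w).const_mul c₁),
      intervalIntegral.integral_const_mul, intervalIntegral.integral_const_mul]
  -- integral of g0
  have hG0_01 : (∫ t in (0:ℝ)..1, g0 t) = 0 := by
    have h1 : (∫ t in (0:ℝ)..(1/2), g0 t) = 1 * (1/2 - 0) := by
      refine integral_const_on_Ioo (by norm_num) fun x hx => ?_
      rw [hg0def]; dsimp only; rw [if_neg (not_le.2 hx.2)]; ring
    have h2 : (∫ t in (1/2:ℝ)..1, g0 t) = (-1) * (1 - 1/2) := by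
      refine integral_const_on_Ioo (by norm_num) fun x hx => ?_
      rw [hg0def]; dsimp only; rw [if_pos (le_of_lt hx.1)]; ring
    have := intervalIntegral.integral_add_adjacent_intervals (hIg0 0 (1/2)) (hIg0 (1/2) 1)
    rw [h1, h2] at this
    rw [← this]; norm_num
  -- piecewise values of primitive of g1
  have hF1a : ∀ w, 0 ≤ w → w ≤ a → (∫ t in (0:ℝ)..w, g1 t) = 0 := by
    intro w h0 h1
    rw [integral_const_on_Ioo h0 fun x hx => hg1zero_lo x (lt_of_lt_of_le hx.2 h1)]
    ring
  have hF1am : ∀ w, a ≤ w → w ≤ m → (∫ t in (0:ℝ)..w, g1 t) = w - a := by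
    intro w h0 h1
    have e1 : (∫ t in a..w, g1 t) = 1 * (w - a) :=
      integral_const_on_Ioo h0 fun x hx => hg1one x (le_of_lt hx.1) (lt_of_lt_of_le hx.2 h1)
    have := intervalIntegral.integral_add_adjacent_intervals (hIg1 0 a) (hIg1 a w)
    rw [hF1a a ha le_rfl, e1] at this
    rw [← this]; ring
  have hF1mb : ∀ w, m ≤ w → w ≤ b → (∫ t in (0:ℝ)..w, g1 t) = (m - a) - (w - m) := by
    intro w h0 h1
    have e1 : (∫ t in m..w, g1 t) = (-1) * (w - m) :=
      integral_const_on_Ioo h0 fun x hx => hg1negone x (le_of_lt hx.1) (lt_of_lt_of_le hx.2 h1)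
    have := intervalIntegral.integral_add_adjacent_intervals (hIg1 0 m) (hIg1 m w)
    rw [hF1am m (le_of_lt ham) le_rfl, e1] at this
    rw [← this]; ring
  have hF1b : ∀ w, b ≤ w → (∫ t in (0:ℝ)..w, g1 t) = 0 := by
    intro w h0
    have e1 : (∫ t in b..w, g1 t) = 0 * (w - b) :=
      integral_const_on_Ioo h0 fun x hx => hg1zero_hi x (le_of_lt hx.1)
    have := intervalIntegral.integral_add_adjacent_intervals (hIg1 0 b) (hIg1 b w)
    rw [hF1mb b (le_of_lt hmb) le_rfl, e1] at this
    rw [← this, hmdef]; ring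
  have hG1_01 : (∫ t in (0:ℝ)..1, g1 t) = 0 := hF1b 1 hb
  -- mean zero
  have hmean_p : (∫ u in (0:ℝ)..1, gp u) = 0 := by rw [hsplitp, hG0_01, hG1_01]; ring
  have hmean_m : (∫ u in (0:ℝ)..1, gm u) = 0 := by rw [hsplitm, hG0_01, hG1_01]; ring
  -- monotone indicator
  have hmono_ind : ∀ r : ℝ, Monotone (fun t => if r ≤ t then (1:ℝ) else 0) := by
    intro r x y hxy
    dsimp only
    split_ifs with h1 h2
    · exact le_refl _
    · exact absurd (h1.trans hxy) h2
    all_goals norm_num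
  have ha1 : a ≤ 1 := le_of_lt (lt_of_lt_of_le hab hb)
  -- the antitone part X
  have hX : Antitone (fun t => c₀ * g0 t) := by
    intro x y hxy
    have h := hmono_ind (1/2) hxy
    dsimp only at h ⊢
    rw [hg0def]
    dsimp only
    nlinarith [hc₀.le]
  have hXvar : eVariationOn (fun t => c₀ * g0 t) (Icc (0:ℝ) 1) ≤ ENNReal.ofReal (2 * c₀) := by
    have h := evar_anti_le (hX.antitoneOn (Icc (0:ℝ) 1))
    have e : c₀ * g0 0 - c₀ * g0 1 = 2 * c₀ := by
      rw [hg0def]; dsimp only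
      rw [if_neg (by norm_num), if_pos (by norm_num)]; ring
    simpa [e] using h
  -- monotone/antitone pieces of c₁ * g1
  have hY1mono : Monotone (fun t => c₁ * (if a ≤ t then (1:ℝ) else 0)
      + c₁ * (if b ≤ t then (1:ℝ) else 0)) := fun x y hxy =>
    add_le_add (mul_le_mul_of_nonneg_left (hmono_ind a hxy) hc₁.le)
      (mul_le_mul_of_nonneg_left (hmono_ind b hxy) hc₁.le)
  have hY2anti : Antitone (fun t => -(2 * c₁ * (if m ≤ t then (1:ℝ) else 0))) := fun x y hxy =>
    neg_le_neg (mul_le_mul_of_nonneg_left (hmono_ind m hxy) (by positivity))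
  have hZ1mono : Monotone (fun t => 2 * c₁ * (if m ≤ t then (1:ℝ) else 0)) := fun x y hxy =>
    mul_le_mul_of_nonneg_left (hmono_ind m hxy) (by positivity)
  have hZ2anti : Antitone (fun t => -(c₁ * (if a ≤ t then (1:ℝ) else 0)
      + c₁ * (if b ≤ t then (1:ℝ) else 0))) := fun x y hxy => neg_le_neg (hY1mono hxy)
  have hY1var : eVariationOn (fun t => c₁ * (if a ≤ t then (1:ℝ) else 0)
      + c₁ * (if b ≤ t then (1:ℝ) else 0)) (Icc (0:ℝ) 1) ≤ ENNReal.ofReal (2 * c₁) := by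
    refine le_trans (evar_mono_le (hY1mono.monotoneOn _)) (ENNReal.ofReal_le_ofReal ?_)
    rw [if_pos ha1, if_pos hb]
    split_ifs <;> linarith
  have hY2var : eVariationOn (fun t => -(2 * c₁ * (if m ≤ t then (1:ℝ) else 0))) (Icc (0:ℝ) 1)
      ≤ ENNReal.ofReal (2 * c₁) := by
    refine le_trans (evar_anti_le (hY2anti.antitoneOn _)) (ENNReal.ofReal_le_ofReal ?_)
    rw [if_pos hm1, if_neg (not_le.2 hm0)]
    linarith
  have hZ1var : eVariationOn (fun t => 2 * c₁ * (if m ≤ t then (1:ℝ) else 0)) (Icc (0:ℝ) 1)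
      ≤ ENNReal.ofReal (2 * c₁) := by
    refine le_trans (evar_mono_le (hZ1mono.monotoneOn _)) (ENNReal.ofReal_le_ofReal ?_)
    rw [if_pos hm1, if_neg (not_le.2 hm0)]
    linarith
  have hZ2var : eVariationOn (fun t => -(c₁ * (if a ≤ t then (1:ℝ) else 0)
      + c₁ * (if b ≤ t then (1:ℝ) else 0))) (Icc (0:ℝ) 1) ≤ ENNReal.ofReal (2 * c₁) := by
    refine le_trans (evar_anti_le (hZ2anti.antitoneOn _)) (ENNReal.ofReal_le_ofReal ?_)
    rw [if_pos ha1, if_pos hb]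
    split_ifs <;> linarith
  have h34 : 2 * c₀ + (2 * c₁ + 2 * c₁) = 3 * s / 4 := by
    rw [hc₀def, hc₁def]; field_simp; ring
  have hvarp34 : eVariationOn gp (Icc (0:ℝ) 1) ≤ ENNReal.ofReal (3 * s / 4) := by
    calc eVariationOn gp (Icc (0:ℝ) 1)
        ≤ eVariationOn (fun t => c₀ * g0 t) (Icc (0:ℝ) 1)
          + eVariationOn (fun t => c₁ * g1 t) (Icc (0:ℝ) 1) :=
          evar_add_le _ _ gp (fun x => rfl) _
      _ ≤ ENNReal.ofReal (2 * c₀)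
          + (ENNReal.ofReal (2 * c₁) + ENNReal.ofReal (2 * c₁)) := by
          refine add_le_add hXvar ?_
          refine le_trans (evar_add_le _ _ _ (fun x => ?_) _) (add_le_add hY1var hY2var)
          rw [hg1def]; dsimp only; ring
      _ = ENNReal.ofReal (2 * c₀ + (2 * c₁ + 2 * c₁)) := by
          rw [← ENNReal.ofReal_add (by linarith : (0:ℝ) ≤ 2 * c₁) (by linarith : (0:ℝ) ≤ 2 * c₁),
            ← ENNReal.ofReal_add (by linarith : (0:ℝ) ≤ 2 * c₀) (by linarith : (0:ℝ) ≤ 2 * c₁ + 2 * c₁)]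
      _ = ENNReal.ofReal (3 * s / 4) := by rw [h34]
  have hvarm34 : eVariationOn gm (Icc (0:ℝ) 1) ≤ ENNReal.ofReal (3 * s / 4) := by
    calc eVariationOn gm (Icc (0:ℝ) 1)
        ≤ eVariationOn (fun t => c₀ * g0 t) (Icc (0:ℝ) 1)
          + eVariationOn (fun t => -(c₁ * g1 t)) (Icc (0:ℝ) 1) :=
          evar_add_le _ _ gm (fun x => sub_eq_add_neg _ _) _
      _ ≤ ENNReal.ofReal (2 * c₀)
          + (ENNReal.ofReal (2 * c₁) + ENNReal.ofReal (2 * c₁)) := by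
          refine add_le_add hXvar ?_
          refine le_trans (evar_add_le _ _ _ (fun x => ?_) _) (add_le_add hZ1var hZ2var)
          rw [hg1def]; dsimp only; ring
      _ = ENNReal.ofReal (2 * c₀ + (2 * c₁ + 2 * c₁)) := by
          rw [← ENNReal.ofReal_add (by linarith : (0:ℝ) ≤ 2 * c₁) (by linarith : (0:ℝ) ≤ 2 * c₁),
            ← ENNReal.ofReal_add (by linarith : (0:ℝ) ≤ 2 * c₀) (by linarith : (0:ℝ) ≤ 2 * c₁ + 2 * c₁)]
      _ = ENNReal.ofReal (3 * s / 4) := by rw [h34]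
  have h34s : (3 * s / 4 : ℝ) ≤ s := by linarith
  have hcc : τ * (c₀ - c₁) = 3 * s / 4 := by
    rw [hc₀def, hc₁def]; field_simp; ring
  -- pointwise lower bound on |gp|, |gm|
  have habs_p : ∀ x ∈ Icc (0:ℝ) 1, c₀ - c₁ ≤ |gp x| := by
    intro x _
    have hx : gp x = c₀ * g0 x + c₁ * g1 x := rfl
    rcases hg0val x with h0 | h0 <;> rcases hg1val x with h1 | h1 | h1 <;>
      rw [h0, h1] at hx <;> rw [hx, le_abs] <;>
      first | (left; linarith) | (right; linarith)
  have habs_m : ∀ x ∈ Icc (0:ℝ) 1, c₀ - c₁ ≤ |gm x| := by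
    intro x _
    have hx : gm x = c₀ * g0 x - c₁ * g1 x := rfl
    rcases hg0val x with h0 | h0 <;> rcases hg1val x with h1 | h1 | h1 <;>
      rw [h0, h1] at hx <;> rw [hx, le_abs] <;>
      first | (left; linarith) | (right; linarith)
  have hlow_p : c₀ - c₁ ≤ ∫ t in (0:ℝ)..1, |gp t| := by
    have h := intervalIntegral.integral_mono_on (by norm_num : (0:ℝ) ≤ 1)
      intervalIntegrable_const ((hIgp 0 1).abs) habs_p
    simpa using h
  have hlow_m : c₀ - c₁ ≤ ∫ t in (0:ℝ)..1, |gm t| := by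
    have h := intervalIntegral.integral_mono_on (by norm_num : (0:ℝ) ≤ 1)
      intervalIntegrable_const ((hIgm 0 1).abs) habs_m
    simpa using h
  refine ⟨gp, gm, le_trans hvarp34 (ENNReal.ofReal_le_ofReal h34s),
    le_trans hvarm34 (ENNReal.ofReal_le_ofReal h34s), ?_, ?_, ?_, ?_⟩
  · simp only [hmean_p, sub_zero]
    calc (eVariationOn gp (Icc (0:ℝ) 1)).toReal ≤ 3 * s / 4 :=
          ENNReal.toReal_le_of_le_ofReal (by linarith) hvarp34
      _ = τ * (c₀ - c₁) := hcc.symm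
      _ ≤ τ * ∫ t in (0:ℝ)..1, |gp t| := mul_le_mul_of_nonneg_left hlow_p hτ0.le
  · simp only [hmean_m, sub_zero]
    calc (eVariationOn gm (Icc (0:ℝ) 1)).toReal ≤ 3 * s / 4 :=
          ENNReal.toReal_le_of_le_ofReal (by linarith) hvarm34
      _ = τ * (c₀ - c₁) := hcc.symm
      _ ≤ τ * ∫ t in (0:ℝ)..1, |gm t| := mul_le_mul_of_nonneg_left hlow_m hτ0.le
  · intro w hw0 hw
    have h1 : (∫ t in (0:ℝ)..w, g1 t) = 0 := by
      rcases hw with h | h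
      · exact hF1a w hw0 h
      · exact hF1b w h
    rw [hsplitp, hsplitm, h1]; ring
  · have hcF1 : Continuous fun x => ∫ t in (0:ℝ)..x, g1 t :=
      intervalIntegral.continuous_primitive hIg1 0
    have hcG0 : Continuous fun x => ∫ t in (0:ℝ)..x, g0 t :=
      intervalIntegral.continuous_primitive hIg0 0
    have hip : (∫ x in (0:ℝ)..1, ∫ t in (0:ℝ)..x, gp t)
        = c₀ * (∫ x in (0:ℝ)..1, ∫ t in (0:ℝ)..x, g0 t)
          + c₁ * ∫ x in (0:ℝ)..1, ∫ t in (0:ℝ)..x, g1 t := by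
      rw [intervalIntegral.integral_congr
        (g := fun x => c₀ * (∫ t in (0:ℝ)..x, g0 t) + c₁ * ∫ t in (0:ℝ)..x, g1 t)
        (fun x _ => hsplitp x)]
      rw [intervalIntegral.integral_add (f := fun x => c₀ * ∫ t in (0:ℝ)..x, g0 t) (g := fun x => c₁ * ∫ t in (0:ℝ)..x, g1 t)
        ((continuous_const.mul hcG0).intervalIntegrable 0 1)
        ((continuous_const.mul hcF1).intervalIntegrable 0 1),
        intervalIntegral.integral_const_mul, intervalIntegral.integral_const_mul]
    have him : (∫ x in (0:ℝ)..1, ∫ t in (0:ℝ)..x, gm t)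
        = c₀ * (∫ x in (0:ℝ)..1, ∫ t in (0:ℝ)..x, g0 t)
          - c₁ * ∫ x in (0:ℝ)..1, ∫ t in (0:ℝ)..x, g1 t := by
      rw [intervalIntegral.integral_congr
        (g := fun x => c₀ * (∫ t in (0:ℝ)..x, g0 t) - c₁ * ∫ t in (0:ℝ)..x, g1 t)
        (fun x _ => hsplitm x)]
      rw [intervalIntegral.integral_sub (f := fun x => c₀ * ∫ t in (0:ℝ)..x, g0 t) (g := fun x => c₁ * ∫ t in (0:ℝ)..x, g1 t)
        ((continuous_const.mul hcG0).intervalIntegrable 0 1)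
        ((continuous_const.mul hcF1).intervalIntegrable 0 1),
        intervalIntegral.integral_const_mul, intervalIntegral.integral_const_mul]
    have hB : (∫ x in (0:ℝ)..1, ∫ t in (0:ℝ)..x, g1 t) = (b - a) ^ 2 / 4 := by
      have i1 : (∫ x in (0:ℝ)..a, ∫ t in (0:ℝ)..x, g1 t) = 0 * (a - 0) :=
        integral_const_on_Ioo ha fun x hx => hF1a x (le_of_lt hx.1) (le_of_lt hx.2)
      have i2 : (∫ x in a..m, ∫ t in (0:ℝ)..x, g1 t) = (m ^ 2 - a ^ 2) / 2 - (m - a) * a := by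
        rw [intervalIntegral.integral_congr (g := fun x => x - a) ?_]
        · rw [intervalIntegral.integral_sub intervalIntegral.intervalIntegrable_id intervalIntegrable_const,
            integral_id, intervalIntegral.integral_const, smul_eq_mul]
        · intro x hx
          rw [uIcc_of_le (le_of_lt ham)] at hx
          exact hF1am x hx.1 hx.2
      have i3 : (∫ x in m..b, ∫ t in (0:ℝ)..x, g1 t)
          = (b - m) * (2 * m - a) - (b ^ 2 - m ^ 2) / 2 := by
        rw [intervalIntegral.integral_congr (g := fun x => (2 * m - a) - x) ?_]
        · rw [intervalIntegral.integral_sub intervalIntegrable_const intervalIntegral.intervalIntegrable_id,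
            integral_id, intervalIntegral.integral_const, smul_eq_mul]
        · intro x hx
          rw [uIcc_of_le (le_of_lt hmb)] at hx
          show (∫ t in (0:ℝ)..x, g1 t) = (2 * m - a) - x
          rw [hF1mb x hx.1 hx.2]; ring
      have i4 : (∫ x in b..1, ∫ t in (0:ℝ)..x, g1 t) = 0 * (1 - b) :=
        integral_const_on_Ioo hb fun x hx => hF1b x (le_of_lt hx.1)
      have s1 := intervalIntegral.integral_add_adjacent_intervals
        (hcF1.intervalIntegrable (μ := volume) 0 a) (hcF1.intervalIntegrable (μ := volume) a m)
      have s2 := intervalIntegral.integral_add_adjacent_intervals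
        (hcF1.intervalIntegrable (μ := volume) 0 m) (hcF1.intervalIntegrable (μ := volume) m b)
      have s3 := intervalIntegral.integral_add_adjacent_intervals
        (hcF1.intervalIntegrable (μ := volume) 0 b) (hcF1.intervalIntegrable (μ := volume) b 1)
      rw [← s3, ← s2, ← s1, i1, i2, i3, i4, hmdef]; ring
    rw [hip, him, hB, hc₁def]
    field_simp
    ring


/-- Fooling-pair construction for the lower complexity bound for integration on the cone
`C_τ`, together with its consequence: any deterministic algorithm using only the data
`f(ξ_1),…,f(ξ_n)` errs by at least `s(τ−2)/(32τ(n+1)²)` on some `f ∈ C_τ` with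
`Var(f′) ≤ s`.  Here `f(x) = ∫₀ˣ g` (so `f(0) = 0`, `f′ = g`,
`f(1) − f(0) = ∫₀¹ g`). -/
theorem lower_bound_cone_integration
    (τ s : ℝ) (hτ : 2 < τ) (hs : 0 < s)
    (n : ℕ) (ξ : Fin n → ℝ) (hξ : ∀ i, ξ i ∈ Icc (0:ℝ) 1) :
    (∃ gp gm : ℝ → ℝ,
      eVariationOn gp (Icc 0 1) ≤ ENNReal.ofReal s ∧
      eVariationOn gm (Icc 0 1) ≤ ENNReal.ofReal s ∧
      (eVariationOn gp (Icc 0 1)).toReal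
        ≤ τ * ∫ t in (0:ℝ)..1, |gp t - ∫ u in (0:ℝ)..1, gp u| ∧
      (eVariationOn gm (Icc 0 1)).toReal
        ≤ τ * ∫ t in (0:ℝ)..1, |gm t - ∫ u in (0:ℝ)..1, gm u| ∧
      (∀ i, (∫ t in (0:ℝ)..(ξ i), gp t) = ∫ t in (0:ℝ)..(ξ i), gm t) ∧
      s * (τ - 2) / (16 * τ * ((n : ℝ) + 1) ^ 2)
        ≤ (∫ x in (0:ℝ)..1, ∫ t in (0:ℝ)..x, gp t)
            - ∫ x in (0:ℝ)..1, ∫ t in (0:ℝ)..x, gm t) ∧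
    (∀ A : (Fin n → ℝ) → ℝ, ∃ g : ℝ → ℝ,
      eVariationOn g (Icc 0 1) ≤ ENNReal.ofReal s ∧
      (eVariationOn g (Icc 0 1)).toReal
        ≤ τ * ∫ t in (0:ℝ)..1, |g t - ∫ u in (0:ℝ)..1, g u| ∧
      s * (τ - 2) / (32 * τ * ((n : ℝ) + 1) ^ 2)
        ≤ |(∫ x in (0:ℝ)..1, ∫ t in (0:ℝ)..x, g t)
            - A (fun i => ∫ t in (0:ℝ)..(ξ i), g t)|) := by
  classical
  set NR : ℝ := (n:ℝ) + 1 with hNR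
  have hNR0 : (0:ℝ) < NR := by positivity
  have hτ0 : (0:ℝ) < τ := by linarith
  obtain ⟨k, hk⟩ : ∃ k : Fin (n+1), ∀ i : Fin n,
      (⟨min (Nat.floor (ξ i * NR)) n, Nat.lt_succ_of_le (min_le_right _ _)⟩ : Fin (n+1)) ≠ k := by
    by_contra hcon
    push_neg at hcon
    have hsurj : Function.Surjective (fun i : Fin n =>
        (⟨min (Nat.floor (ξ i * NR)) n, Nat.lt_succ_of_le (min_le_right _ _)⟩ : Fin (n+1))) := by
      intro y
      obtain ⟨i, hi⟩ := hcon y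
      exact ⟨i, hi⟩
    have hcard := Fintype.card_le_of_surjective _ hsurj
    simp only [Fintype.card_fin] at hcard
    omega
  set a : ℝ := (k : ℕ) / NR with hadef
  set b : ℝ := ((k : ℕ) + 1) / NR with hbdef
  have ha : 0 ≤ a := by positivity
  have hab : a < b := by
    rw [hadef, hbdef, div_lt_div_iff₀ hNR0 hNR0]
    nlinarith
  have hb1 : b ≤ 1 := by
    rw [hbdef, div_le_one hNR0, hNR]
    have : (k:ℕ) < n + 1 := k.isLt
    exact_mod_cast Nat.succ_le_of_lt this
  have hgap : ∀ i, ξ i ≤ a ∨ b ≤ ξ i := by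
    intro i
    by_contra hcon
    push_neg at hcon
    obtain ⟨h1, h2⟩ := hcon
    apply hk i
    have hge : ((k:ℕ):ℝ) < ξ i * NR := by
      rw [hadef] at h1
      exact (div_lt_iff₀ hNR0).mp h1
    have hlt : ξ i * NR < ((k:ℕ):ℝ) + 1 := by
      rw [hbdef] at h2
      exact (lt_div_iff₀ hNR0).mp h2
    have hfl : ⌊ξ i * NR⌋₊ = (k:ℕ) := by
      rw [Nat.floor_eq_iff (by nlinarith [(hξ i).1])]
      exact ⟨le_of_lt hge, by exact_mod_cast hlt⟩
    apply Fin.ext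
    simp only [hfl]
    exact min_eq_left (Nat.lt_succ_iff.mp k.isLt)
  clear_value a b NR
  obtain ⟨gp, gm, hv1, hv2, hcone1, hcone2, hagree, hgapval⟩ := key τ s a b hτ hs ha hab hb1
  have hba : b - a = 1 / NR := by
    rw [hadef, hbdef]
    field_simp
    ring
  have hgap16 : (∫ x in (0:ℝ)..1, ∫ t in (0:ℝ)..x, gp t)
      - (∫ x in (0:ℝ)..1, ∫ t in (0:ℝ)..x, gm t) = s * (τ - 2) / (16 * τ * NR ^ 2) := by
    rw [hgapval, hba]
    field_simp
  have hagree' : ∀ i, (∫ t in (0:ℝ)..(ξ i), gp t) = ∫ t in (0:ℝ)..(ξ i), gm t :=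
    fun i => hagree (ξ i) (hξ i).1 (hgap i)
  constructor
  · exact ⟨gp, gm, hv1, hv2, hcone1, hcone2, hagree', le_of_eq hgap16.symm⟩
  · intro A
    set Ip := ∫ x in (0:ℝ)..1, ∫ t in (0:ℝ)..x, gp t with hIp
    set Im := ∫ x in (0:ℝ)..1, ∫ t in (0:ℝ)..x, gm t with hIm
    set v := A (fun i => ∫ t in (0:ℝ)..(ξ i), gp t) with hv
    have hdata : (fun i => ∫ t in (0:ℝ)..(ξ i), gm t) = (fun i => ∫ t in (0:ℝ)..(ξ i), gp t) :=
      funext fun i => (hagree' i).symm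
    have heq : s * (τ - 2) / (32 * τ * NR ^ 2) = (Ip - Im) / 2 := by
      have hNR2 : NR ^ 2 ≠ 0 := by positivity
      rw [hgap16, div_div]
      rw [show (16:ℝ) * τ * NR ^ 2 * 2 = 32 * τ * NR ^ 2 by ring]
    rcases le_or_gt v ((Ip + Im) / 2) with hle | hlt
    · refine ⟨gp, hv1, hcone1, ?_⟩
      have hIpv : s * (τ - 2) / (32 * τ * NR ^ 2) ≤ Ip - v := by linarith
      exact le_trans hIpv (le_abs_self _)
    · refine ⟨gm, hv2, hcone2, ?_⟩
      rw [hdata]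
      have hImv : s * (τ - 2) / (32 * τ * NR ^ 2) ≤ -(Im - v) := by linarith
      exact le_trans hImv (neg_le_abs _)
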